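/- arXiv:2006.10825 — 2 statements merged into one kernel-verified Lean document; each statement's English description precedes it below -/
import Mathlib

section
/- Let G be a locally compact abelian group, let D and E be relatively dense subsets of G, and let V be a relatively compact open neighborhood of the neutral element of G. Then the set ((D−D)+V) ∩ ((E−E)+V) is relatively dense in G, where D−D := {d−d' : d,d' ∈ D} and A+V := {a+v : a ∈ A, v ∈ V}. -/
open MeasureTheory Filter Topology Set Pointwise

noncomputable section

namespace APPaper

/-- A subset `A` of `G` is relatively dense if there is a compact `K ⊆ G` with
`G = ⋃_{a ∈ A} (a + K)`. -/
def RelDense {G : Type*} [AddCommGroup G] [TopologicalSpace G] (A : Set G) : Prop :=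
  ∃ K : Set G, IsCompact K ∧ ∀ g : G, ∃ a ∈ A, g - a ∈ K

/-- A continuous character of `G`, i.e. a continuous homomorphism into the unit circle
(realized inside `ℂ`). -/
def IsChar {G : Type*} [AddCommGroup G] [TopologicalSpace G] (ξ : G → ℂ) : Prop :=
  Continuous ξ ∧ (∀ t, ‖ξ t‖ = 1) ∧ ∀ s t, ξ (s + t) = ξ s * ξ t

/-- `B` is a Følner sequence (of open, relatively compact, nonempty sets) for the
measure `μ` on `G`. -/
structure IsFolner {G : Type*} [AddCommGroup G] [TopologicalSpace G] [MeasurableSpace G]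
    (μ : Measure G) (B : ℕ → Set G) : Prop where
  isOpen : ∀ n, IsOpen (B n)
  nonempty : ∀ n, (B n).Nonempty
  relCompact : ∀ n, IsCompact (closure (B n))
  folner : ∀ t : G,
    Tendsto (fun n => (μ ((B n \ (t +ᵥ B n)) ∪ ((t +ᵥ B n) \ B n))).toReal / (μ (B n)).toReal)
      atTop (𝓝 0)

/-- The average `(1/|B n|) ∫_{B n} h` of a real valued function. -/
def avg {G : Type*} [MeasurableSpace G] (μ : Measure G) (B : ℕ → Set G) (n : ℕ)
    (h : G → ℝ) : ℝ :=
  (μ (B n)).toReal⁻¹ * ∫ t in B n, h t ∂μ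

/-- The average `(1/|B n|) ∫_{B n} h` of a complex valued function. -/
def avgC {G : Type*} [MeasurableSpace G] (μ : Measure G) (B : ℕ → Set G) (n : ℕ)
    (h : G → ℂ) : ℂ :=
  (μ (B n)).toReal⁻¹ • ∫ t in B n, h t ∂μ

/-- The upper mean `M̄(h) = limsup_n (1/|B n|) ∫_{B n} h` along the Følner sequence. -/
def upperMean {G : Type*} [MeasurableSpace G] (μ : Measure G) (B : ℕ → Set G) (h : G → ℝ) : ℝ :=
  Filter.limsup (fun n => avg μ B n h) Filter.atTop

/-- The upper density `Dens(A) = M̄(1_A)` of a subset of `G`. -/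
def upperDens {G : Type*} [MeasurableSpace G] (μ : Measure G) (B : ℕ → Set G) (A : Set G) : ℝ :=
  upperMean μ B (A.indicator fun _ => (1 : ℝ))

/-- `M̄_n(h) = sup_{r ∈ G} (1/|B n|) ∫_{B n + r} h`. -/
def supAvg {G : Type*} [AddCommGroup G] [MeasurableSpace G] (μ : Measure G) (B : ℕ → Set G)
    (n : ℕ) (h : G → ℝ) : ℝ :=
  ⨆ r : G, (μ (B n)).toReal⁻¹ * ∫ t in (r +ᵥ B n), h t ∂μ

/-- A function `f : G → E` is mean almost periodic (w.r.t. `(B n)`) if for each `ε > 0` the set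
of `t` with `M̄(‖f - f(· - t)‖) < ε` is relatively dense. -/
def MeanAPFun {G : Type*} [AddCommGroup G] [TopologicalSpace G] [MeasurableSpace G]
    (μ : Measure G) (B : ℕ → Set G) {E : Type*} [NormedAddCommGroup E] (f : G → E) : Prop :=
  ∀ ε : ℝ, 0 < ε → RelDense {t : G | upperMean μ B (fun s => ‖f s - f (s - t)‖) < ε}

/-- A function `f : G → ℂ` is Besicovitch almost periodic (w.r.t. `(B n)`) if it can be
approximated, in the seminorm `M̄(|·|)`, by finite linear combinations of continuous
characters. -/
def BesicovitchAPFun {G : Type*} [AddCommGroup G] [TopologicalSpace G] [MeasurableSpace G]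
    (μ : Measure G) (B : ℕ → Set G) (f : G → ℂ) : Prop :=
  ∀ ε : ℝ, 0 < ε → ∃ (k : ℕ) (ξ : Fin k → G → ℂ) (c : Fin k → ℂ),
    (∀ j, IsChar (ξ j)) ∧ upperMean μ B (fun s => ‖f s - ∑ j, c j * ξ j s‖) < ε

/-- A function `f : G → E` is Bohr almost periodic if for every `ε > 0` the set of `t` with
`‖f - f(· - t)‖_∞ < ε` is relatively dense. -/
def BohrAPFun {G : Type*} [AddCommGroup G] [TopologicalSpace G] {E : Type*}
    [NormedAddCommGroup E] (f : G → E) : Prop :=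
  ∀ ε : ℝ, 0 < ε → RelDense {t : G | (⨆ s : G, ‖f s - f (s - t)‖) < ε}

/-- The orbit `{t +ᵥ x : t ∈ G}` of a point. -/
def orbitSet (G : Type*) {X : Type*} [AddCommGroup G] [AddAction G X] (x : X) : Set X :=
  Set.range fun t : G => t +ᵥ x

/-- The averaged pseudometric `D(x,y) = M̄(s ↦ dist(s x, s y))`. -/
def avgDist {G : Type*} [AddCommGroup G] [MeasurableSpace G] {X : Type*} [PseudoMetricSpace X]
    [AddAction G X] (μ : Measure G) (B : ℕ → Set G) (x y : X) : ℝ :=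
  upperMean μ B fun s => dist (s +ᵥ x) (s +ᵥ y)

/-- A point `x` is mean almost periodic (w.r.t. the metric of `X` and `(B n)`) if for every
`ε > 0` the set `{t : D(x, t x) < ε}` is relatively dense. -/
def MeanAPPoint {G : Type*} [AddCommGroup G] [TopologicalSpace G] [MeasurableSpace G]
    {X : Type*} [PseudoMetricSpace X] [AddAction G X] (μ : Measure G) (B : ℕ → Set G)
    (x : X) : Prop :=
  ∀ ε : ℝ, 0 < ε → RelDense {t : G | avgDist μ B x (t +ᵥ x) < ε}

/-- Mean almost periodicity of a point with respect to an abstract metric `d` on `X`. -/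
def MeanAPPointWith {G : Type*} [AddCommGroup G] [TopologicalSpace G] [MeasurableSpace G]
    {X : Type*} [AddAction G X] (μ : Measure G) (B : ℕ → Set G) (d : X → X → ℝ)
    (x : X) : Prop :=
  ∀ ε : ℝ, 0 < ε → RelDense {t : G | upperMean μ B (fun s => d (s +ᵥ x) (s +ᵥ (t +ᵥ x))) < ε}

/-- A point `x` is Besicovitch almost periodic if `t ↦ f (t +ᵥ x)` is a Besicovitch almost
periodic function for every continuous `f : X → ℂ`. -/
def BesicovitchAPPoint {G : Type*} [AddCommGroup G] [TopologicalSpace G] [MeasurableSpace G]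
    {X : Type*} [TopologicalSpace X] [AddAction G X] (μ : Measure G) (B : ℕ → Set G)
    (x : X) : Prop :=
  ∀ f : C(X, ℂ), BesicovitchAPFun μ B fun t : G => f (t +ᵥ x)

/-- The averaged pseudometric `D_n(x,y) = M̄_n(s ↦ dist(s x, s y))` at level `n`. -/
def weylDist {G : Type*} [AddCommGroup G] [MeasurableSpace G] {X : Type*} [PseudoMetricSpace X]
    [AddAction G X] (μ : Measure G) (B : ℕ → Set G) (n : ℕ) (x y : X) : ℝ :=
  supAvg μ B n fun s => dist (s +ᵥ x) (s +ᵥ y)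

/-- A point `x` is Weyl almost periodic if for every `ε > 0` there is an `N` such that
`{t : D_N(x, t x) < ε}` is relatively dense. -/
def WeylAPPoint {G : Type*} [AddCommGroup G] [TopologicalSpace G] [MeasurableSpace G]
    {X : Type*} [PseudoMetricSpace X] [AddAction G X] (μ : Measure G) (B : ℕ → Set G)
    (x : X) : Prop :=
  ∀ ε : ℝ, 0 < ε → ∃ N : ℕ, RelDense {t : G | weylDist μ B N x (t +ᵥ x) < ε}

/-- A point `y` is generic for the measure `m` along `(B n)`. -/
def IsGeneric {G : Type*} [AddCommGroup G] [MeasurableSpace G] {X : Type*}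
    [TopologicalSpace X] [MeasurableSpace X] [AddAction G X] (μ : Measure G) (B : ℕ → Set G)
    (m : Measure X) (y : X) : Prop :=
  ∀ f : C(X, ℂ),
    Tendsto (fun n => avgC μ B n fun t => f (t +ᵥ y)) atTop (𝓝 (∫ z, f z ∂m))

/-- The measure `m` is invariant under the action of `G`. -/
def InvariantMeasure (G : Type*) [AddCommGroup G] {X : Type*} [MeasurableSpace X]
    [AddAction G X] (m : Measure X) : Prop :=
  ∀ t : G, MeasurePreserving (fun x : X => t +ᵥ x) m m

/-- The measure `m` is ergodic for the action of `G`. -/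
def ErgodicMeasure (G : Type*) [AddCommGroup G] {X : Type*} [MeasurableSpace X]
    [AddAction G X] (m : Measure X) : Prop :=
  ∀ A : Set X, MeasurableSet A → (∀ t : G, (fun x : X => t +ᵥ x) ⁻¹' A = A) →
    m A = 0 ∨ m A = 1

/-- `f` is an eigenfunction of `(X,G,m)` with eigenvalue the continuous character `ξ`. -/
def IsEigenfunctionWith {G : Type*} [AddCommGroup G] [TopologicalSpace G] {X : Type*}
    [MeasurableSpace X] [AddAction G X] (m : Measure X) (ξ : G → ℂ) (f : X → ℂ) : Prop :=
  IsChar ξ ∧ MemLp f 2 m ∧ ¬ f =ᵐ[m] (fun _ => (0 : ℂ)) ∧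
    ∀ t : G, (fun x => f (t +ᵥ x)) =ᵐ[m] fun x => ξ t * f x

/-- The set of eigenvalues of `(X,G,m)`. -/
def Eig (G : Type*) [AddCommGroup G] [TopologicalSpace G] {X : Type*} [MeasurableSpace X]
    [AddAction G X] (m : Measure X) : Set (G → ℂ) :=
  {ξ | ∃ f : X → ℂ, IsEigenfunctionWith m ξ f}

/-- `(X,G,m)` has pure point spectrum: `L²(X,m)` possesses an orthonormal (Hilbert) basis
consisting of eigenfunctions. -/
def PurePointSpectrum (G : Type*) [AddCommGroup G] [TopologicalSpace G] {X : Type*}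
    [MeasurableSpace X] [AddAction G X] (m : Measure X) : Prop :=
  ∃ (ι : Type) (b : HilbertBasis ι ℂ (Lp ℂ 2 m)), ∀ i : ι,
    ∃ (ξ : G → ℂ) (f : X → ℂ) (hf : MemLp f 2 m),
      IsEigenfunctionWith m ξ f ∧ b i = hf.toLp f

/-- Every eigenvalue of `(X,G,m)` admits a continuous eigenfunction. -/
def ContinuousEigenfunctions (G : Type*) [AddCommGroup G] [TopologicalSpace G] {X : Type*}
    [TopologicalSpace X] [MeasurableSpace X] [AddAction G X] (m : Measure X) : Prop :=
  ∀ ξ ∈ Eig G m, ∃ f : X → ℂ, Continuous f ∧ IsEigenfunctionWith m ξ f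

/-- The set of frequencies of a point `x`: those continuous characters `ξ` for which the
average `A((t ↦ f(t +ᵥ x)) ⋅ conj ξ)` exists and is nonzero for some `f ∈ C(X)`. -/
def Freq {G : Type*} [AddCommGroup G] [TopologicalSpace G] [MeasurableSpace G] {X : Type*}
    [TopologicalSpace X] [AddAction G X] (μ : Measure G) (B : ℕ → Set G) (x : X) :
    Set (G → ℂ) :=
  {ξ | IsChar ξ ∧ ∃ (f : C(X, ℂ)) (c : ℂ), c ≠ 0 ∧
    Tendsto (fun n => avgC μ B n fun t => f (t +ᵥ x) * (starRingEnd ℂ) (ξ t)) atTop (𝓝 c)}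

/-- Birkhoff's ergodic theorem holds along `(B n)` for `(X,G,m)`. -/
def BirkhoffAlong {G : Type*} [AddCommGroup G] [MeasurableSpace G] {X : Type*}
    [MeasurableSpace X] [AddAction G X] (μ : Measure G) (B : ℕ → Set G) (m : Measure X) :
    Prop :=
  ∀ f : X → ℂ, Integrable f m →
    ∀ᵐ x ∂m, Tendsto (fun n => avgC μ B n fun t => f (t +ᵥ x)) atTop (𝓝 (∫ z, f z ∂m))

/-- `e` is (a representative of) the orthogonal projection in `L²(X,m)` of `f` onto the
eigenspace of `ξ`: it belongs to the eigenspace and `f - e` is orthogonal to it. -/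
def IsProjOnEigenspace {G : Type*} [AddCommGroup G] {X : Type*} [MeasurableSpace X]
    [AddAction G X] (m : Measure X) (ξ : G → ℂ) (f e : X → ℂ) : Prop :=
  MemLp e 2 m ∧ (∀ t : G, (fun x => e (t +ᵥ x)) =ᵐ[m] fun x => ξ t * e x) ∧
    ∀ g : X → ℂ, MemLp g 2 m → (∀ t : G, (fun x => g (t +ᵥ x)) =ᵐ[m] fun x => ξ t * g x) →
      ∫ x, (f x - e x) * (starRingEnd ℂ) (g x) ∂m = 0

/-- `d` is a metric on the topological space `X` which generates its topology. -/
structure IsCompatMetric {X : Type*} [TopologicalSpace X] (d : X → X → ℝ) : Prop where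
  refl : ∀ x, d x x = 0
  eq_of : ∀ x y, d x y = 0 → x = y
  symm : ∀ x y, d x y = d y x
  triangle : ∀ x y z, d x z ≤ d x y + d y z
  nhds_basis : ∀ x : X, (𝓝 x).HasBasis (fun ε : ℝ => 0 < ε) fun ε => {y | d x y < ε}

/-- The metric `d̄(y,z) = sup_{s ∈ G} dist (s y) (s z)`. -/
def supDist (G : Type*) [AddCommGroup G] {X : Type*} [PseudoMetricSpace X] [AddAction G X]
    (y z : X) : ℝ :=
  ⨆ s : G, dist (s +ᵥ y) (s +ᵥ z)

/-- The function `f_x : t ↦ f (t +ᵥ x)` as a bounded continuous function on `G`. -/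
def fnAlong {G : Type*} [AddCommGroup G] [TopologicalSpace G] {X : Type*}
    [TopologicalSpace X] [CompactSpace X] [AddAction G X] [ContinuousVAdd G X]
    (f : C(X, ℂ)) (x : X) : BoundedContinuousFunction G ℂ :=
  BoundedContinuousFunction.ofNormedAddCommGroup (fun t => f (t +ᵥ x))
    (f.continuous.comp (continuous_vadd.comp (continuous_id.prodMk continuous_const)))
    ‖f‖ (fun t => f.norm_coe_le_norm _)

/-- The translate `F(· - t)` of a bounded continuous function on `G`. -/
def translateB {G : Type*} [AddCommGroup G] [TopologicalSpace G] [IsTopologicalAddGroup G]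
    (t : G) (F : BoundedContinuousFunction G ℂ) : BoundedContinuousFunction G ℂ :=
  F.compContinuous ⟨fun s => s - t, continuous_sub_right t⟩

/-- A bounded continuous function on `G` is weakly almost periodic if it is uniformly
continuous and its set of translates is relatively compact in the weak topology. -/
def WeaklyAPFun {G : Type*} [AddCommGroup G] [UniformSpace G] [IsUniformAddGroup G]
    (F : BoundedContinuousFunction G ℂ) : Prop :=
  UniformContinuous ⇑F ∧
    IsCompact (closure
      ((toWeakSpace ℂ (BoundedContinuousFunction G ℂ)) '' Set.range fun t : G => translateB t F))

/-- A point `x` is weakly almost periodic if `f_x` is weakly almost periodic for every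
continuous `f : X → ℂ`. -/
def WeaklyAPPoint (G : Type*) [AddCommGroup G] [UniformSpace G] [IsUniformAddGroup G]
    {X : Type*} [TopologicalSpace X] [CompactSpace X] [AddAction G X] [ContinuousVAdd G X]
    (x : X) : Prop :=
  ∀ f : C(X, ℂ), WeaklyAPFun (G := G) (fnAlong f x)

/-- A point `x` is Bohr almost periodic if `f_x` is Bohr almost periodic for every
continuous `f : X → ℂ`. -/
def BohrAPPoint (G : Type*) [AddCommGroup G] [TopologicalSpace G] {X : Type*}
    [TopologicalSpace X] [AddAction G X] (x : X) : Prop :=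
  ∀ f : C(X, ℂ), BohrAPFun fun t : G => f (t +ᵥ x)

/-- The function `f_t : x ↦ f (t +ᵥ x)` as a continuous function on `X`. -/
def translateCM {G : Type*} [AddCommGroup G] {X : Type*} [TopologicalSpace X] [AddAction G X]
    [ContinuousConstVAdd G X] (t : G) (f : C(X, ℂ)) : C(X, ℂ) :=
  f.comp ⟨fun x => t +ᵥ x, continuous_const_vadd t⟩

/-- `(X,G)` is a weakly almost periodic dynamical system: for every `f ∈ C(X)` the family
`{f_t : t ∈ G}` is relatively compact in the weak topology of `C(X)`. -/
def WeaklyAPSystem (G : Type*) (X : Type*) [AddCommGroup G] [TopologicalSpace X]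
    [CompactSpace X] [T2Space X] [AddAction G X] [ContinuousConstVAdd G X] : Prop :=
  ∀ f : C(X, ℂ),
    IsCompact (closure ((toWeakSpace ℂ C(X, ℂ)) '' Set.range fun t : G => translateCM t f))

/-- Intersections of thickened difference sets of relatively dense sets
are relatively dense. -/
theorem statement_16
    {G : Type*} [AddCommGroup G] [TopologicalSpace G] [IsTopologicalAddGroup G] [T2Space G]
    [LocallyCompactSpace G]
    {D E V : Set G} (hD : RelDense D) (hE : RelDense E)
    (hVopen : IsOpen V) (hV0 : (0 : G) ∈ V) (hVcomp : IsCompact (closure V)) :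
    RelDense ((D - D + V) ∩ (E - E + V)) := by
  classical
  have hsub : ∀ {A B : Set G}, IsCompact A → IsCompact B → IsCompact (A - B) := by
    intro A B hA hB
    rw [sub_eq_add_neg]
    exact hA.add hB.neg
  obtain ⟨KD, hKD, hDd⟩ := hD
  obtain ⟨KE, hKE, hEd⟩ := hE
  choose φ hφD hφK using hDd
  choose ψ hψE hψK using hEd
  have hM : IsCompact (KE - KD) := hsub hKE hKD
  have hδM : ∀ g : G, φ g - ψ g ∈ KE - KD := fun g => by
    have h1 : φ g - ψ g = (g - ψ g) - (g - φ g) := by abel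
    rw [h1]; exact Set.sub_mem_sub (hψK g) (hφK g)
  have hUopen : ∀ m : G, IsOpen {x : G | x - m ∈ V} := fun m =>
    hVopen.preimage (continuous_sub_right m)
  have hcover : KE - KD ⊆ ⋃ m : G, {x : G | x - m ∈ V} := fun x _ =>
    Set.mem_iUnion.2 ⟨x, by simpa using hV0⟩
  obtain ⟨s, hs⟩ := hM.elim_finite_subcover _ hUopen hcover
  have hcolor : ∀ g : G, ∃ m, m ∈ s ∧ (φ g - ψ g) - m ∈ V := fun g => by
    have := hs (hδM g)
    simpa [Set.mem_iUnion] using this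
  choose c hcs hcV using hcolor
  let rep : G → G := fun i => if h : ∃ x, c x = i then h.choose else 0
  refine ⟨((KD - KD) - closure V) + (rep '' (s : Set G)), ?_, ?_⟩
  · exact (hsub (hsub hKD hKD) hVcomp).add (((s : Set G).toFinite.image rep).isCompact)
  · intro g
    have hex : ∃ x, c x = c g := ⟨g, rfl⟩
    have hch : c (rep (c g)) = c g := by
      have hrw : rep (c g) = hex.choose := dif_pos hex
      rw [hrw]; exact hex.choose_spec
    set b := rep (c g) with hb
    have hv₁ : (φ b - ψ b) - c b ∈ V := hcV b
    have hv₂ : (φ g - ψ g) - c g ∈ V := hcV g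
    refine ⟨(φ g - φ b) + ((φ b - ψ b) - c b), ⟨?_, ?_⟩, ?_⟩
    · exact Set.add_mem_add (Set.sub_mem_sub (hφD g) (hφD b)) hv₁
    · have heq : (φ g - φ b) + ((φ b - ψ b) - c b)
          = (ψ g - ψ b) + ((φ g - ψ g) - c g) := by
        rw [hch]; abel
      rw [heq]
      exact Set.add_mem_add (Set.sub_mem_sub (hψE g) (hψE b)) hv₂
    · have heq2 : g - ((φ g - φ b) + ((φ b - ψ b) - c b))
          = ((g - φ g) - (b - φ b) - ((φ b - ψ b) - c b)) + b := by abel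
      rw [heq2]
      exact Set.add_mem_add
        (Set.sub_mem_sub (Set.sub_mem_sub (hφK g) (hφK b)) (subset_closure hv₁))
        ⟨c g, hcs g, rfl⟩

end APPaper
end
end

section
/- Let G be a σ-compact locally compact abelian group and (B_n) a Følner sequence in G. Then the set of all bounded uniformly continuous mean almost periodic functions G → ℂ is closed under complex conjugation and is a subalgebra of the algebra of bounded uniformly continuous functions on G which is closed with respect to the supremum norm. -/
open MeasureTheory Filter Topology Set Pointwise
set_option linter.unusedVariables false
set_option linter.unusedSectionVars false

noncomputable section

namespace APPaper

/-- The set of bounded, uniformly continuous, mean almost periodic functions on `G`. -/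
def MeanAPAlgebra {G : Type*} [AddCommGroup G] [UniformSpace G] [IsUniformAddGroup G]
    [MeasurableSpace G] (μ : Measure G) (B : ℕ → Set G) : Set (G → ℂ) :=
  {f | (∃ C : ℝ, ∀ t, ‖f t‖ ≤ C) ∧ UniformContinuous f ∧ MeanAPFun μ B f}

section Helpers

open scoped Uniformity in
theorem _uc_dummy : True := trivial

open scoped Uniformity

variable {G : Type*} [AddCommGroup G] [UniformSpace G] [IsUniformAddGroup G] [T2Space G]
    [LocallyCompactSpace G] [SigmaCompactSpace G] [MeasurableSpace G] [BorelSpace G]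
    {μ : Measure G} [μ.IsAddHaarMeasure] {B : ℕ → Set G}

/-- A convenient class of integrands: continuous, nonnegative, bounded above. -/
def NiceFn (h : G → ℝ) (C : ℝ) : Prop :=
  Continuous h ∧ (∀ s, 0 ≤ h s) ∧ ∀ s, h s ≤ C

theorem NiceFn.c {h : G → ℝ} {C : ℝ} (hh : NiceFn h C) : Continuous h := hh.1
theorem NiceFn.nn {h : G → ℝ} {C : ℝ} (hh : NiceFn h C) : ∀ s, 0 ≤ h s := hh.2.1
theorem NiceFn.bd {h : G → ℝ} {C : ℝ} (hh : NiceFn h C) : ∀ s, h s ≤ C := hh.2.2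
theorem NiceFn.Cnn {h : G → ℝ} {C : ℝ} (hh : NiceFn h C) : 0 ≤ C :=
  (hh.nn 0).trans (hh.bd 0)

theorem NiceFn.const_mul {h : G → ℝ} {C : ℝ} (hh : NiceFn h C) {a : ℝ} (ha : 0 ≤ a) :
    NiceFn (fun s => a * h s) (a * C) :=
  ⟨continuous_const.mul hh.c, fun s => mul_nonneg ha (hh.nn s),
    fun s => mul_le_mul_of_nonneg_left (hh.bd s) ha⟩

theorem IsFolner.measure_ne_top (hB : IsFolner μ B) (n : ℕ) : μ (B n) ≠ ⊤ :=
  (lt_of_le_of_lt (measure_mono subset_closure) (hB.relCompact n).measure_lt_top).ne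

theorem IsFolner.toReal_pos (hB : IsFolner μ B) (n : ℕ) : 0 < (μ (B n)).toReal :=
  ENNReal.toReal_pos ((hB.isOpen n).measure_ne_zero μ (hB.nonempty n))
    (hB.measure_ne_top n)

theorem NiceFn.integrableOn {h : G → ℝ} {C : ℝ} (hh : NiceFn h C) {S : Set G}
    (hS : μ S ≠ ⊤) : IntegrableOn h S μ := by
  refine Integrable.mono' (g := fun _ => C) (integrableOn_const hS)
    hh.c.aestronglyMeasurable.restrict ?_
  exact Eventually.of_forall fun s => by
    rw [Real.norm_eq_abs, abs_of_nonneg (hh.nn s)]; exact hh.bd s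

theorem avg_nonneg' (hB : IsFolner μ B) {h : G → ℝ} (h0 : ∀ s, 0 ≤ h s) (n : ℕ) :
    0 ≤ avg μ B n h :=
  mul_nonneg (inv_nonneg.2 ENNReal.toReal_nonneg)
    (setIntegral_nonneg (hB.isOpen n).measurableSet fun s _ => h0 s)

theorem avg_le' (hB : IsFolner μ B) {h : G → ℝ} {C : ℝ} (hh : NiceFn h C) (n : ℕ) :
    avg μ B n h ≤ C := by
  have hpos := hB.toReal_pos n
  have h1 : ∫ t in B n, h t ∂μ ≤ C * (μ (B n)).toReal := by
    calc ∫ t in B n, h t ∂μ ≤ ∫ _ in B n, C ∂μ :=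
          setIntegral_mono (hh.integrableOn (hB.measure_ne_top n))
            (integrableOn_const (hB.measure_ne_top n)) hh.bd
      _ = C * (μ (B n)).toReal := by rw [setIntegral_const, smul_eq_mul, mul_comm, measureReal_def]
  rw [avg, inv_mul_le_iff₀ hpos, mul_comm]
  exact h1

theorem avg_bddBelow (hB : IsFolner μ B) {h : G → ℝ} (h0 : ∀ s, 0 ≤ h s) :
    IsBoundedUnder (· ≥ ·) atTop (fun n => avg μ B n h) :=
  isBoundedUnder_of ⟨0, fun n => avg_nonneg' hB h0 n⟩

theorem avg_bddAbove (hB : IsFolner μ B) {h : G → ℝ} {C : ℝ} (hh : NiceFn h C) :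
    IsBoundedUnder (· ≤ ·) atTop (fun n => avg μ B n h) :=
  isBoundedUnder_of ⟨C, fun n => avg_le' hB hh n⟩

theorem avg_cobdd (hB : IsFolner μ B) {h : G → ℝ} (h0 : ∀ s, 0 ≤ h s) :
    IsCoboundedUnder (· ≤ ·) atTop (fun n => avg μ B n h) :=
  (avg_bddBelow hB h0).isCoboundedUnder_le

theorem upperMean_le_of (hB : IsFolner μ B) {h : G → ℝ} {C c : ℝ} (hh : NiceFn h C)
    (hc : ∀ s, h s ≤ c) : upperMean μ B h ≤ c :=
  limsup_le_of_le (avg_cobdd hB hh.nn)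
    (Eventually.of_forall fun n => avg_le' hB ⟨hh.c, hh.nn, hc⟩ n)

theorem upperMean_const (hB : IsFolner μ B) (c : ℝ) :
    upperMean μ B (fun _ => c) = c := by
  have hav : ∀ n, avg μ B n (fun _ => c) = c := fun n => by
    rw [avg, setIntegral_const, smul_eq_mul, ← mul_assoc, measureReal_def,
      inv_mul_cancel₀ (hB.toReal_pos n).ne', one_mul]
  rw [upperMean]
  simp only [hav]
  exact limsup_const c

theorem avg_add' (hB : IsFolner μ B) {h2 h3 : G → ℝ} {C2 C3 : ℝ}
    (hh2 : NiceFn h2 C2) (hh3 : NiceFn h3 C3) (n : ℕ) :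
    avg μ B n (fun s => h2 s + h3 s) = avg μ B n h2 + avg μ B n h3 := by
  rw [avg, avg, avg, ← mul_add, ← integral_add (hh2.integrableOn (hB.measure_ne_top n))
    (hh3.integrableOn (hB.measure_ne_top n))]

theorem upperMean_le_add (hB : IsFolner μ B) {h1 h2 h3 : G → ℝ} {C1 C2 C3 : ℝ}
    (hh1 : NiceFn h1 C1) (hh2 : NiceFn h2 C2) (hh3 : NiceFn h3 C3)
    (hle : ∀ s, h1 s ≤ h2 s + h3 s) :
    upperMean μ B h1 ≤ upperMean μ B h2 + upperMean μ B h3 := by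
  have key : ∀ n, avg μ B n h1 ≤ avg μ B n h2 + avg μ B n h3 := by
    intro n
    rw [← avg_add' hB hh2 hh3 n, avg, avg]
    refine mul_le_mul_of_nonneg_left ?_ (inv_nonneg.2 ENNReal.toReal_nonneg)
    exact setIntegral_mono (hh1.integrableOn (hB.measure_ne_top n))
      (((hh2.integrableOn (hB.measure_ne_top n))).add
        ((hh3.integrableOn (hB.measure_ne_top n)))) hle
  calc upperMean μ B h1
      ≤ limsup (fun n => avg μ B n h2 + avg μ B n h3) atTop :=
        limsup_le_limsup (Eventually.of_forall key) (avg_cobdd hB hh1.nn)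
          (isBoundedUnder_of ⟨C2 + C3, fun n =>
            add_le_add (avg_le' hB hh2 n) (avg_le' hB hh3 n)⟩)
    _ ≤ upperMean μ B h2 + upperMean μ B h3 :=
        limsup_add_le (avg_bddBelow hB hh2.nn) (avg_bddAbove hB hh2)
          (avg_cobdd hB hh3.nn) (avg_bddAbove hB hh3)

theorem upperMean_le_add_const (hB : IsFolner μ B) {h1 h2 : G → ℝ} {C1 C2 c : ℝ}
    (hh1 : NiceFn h1 C1) (hh2 : NiceFn h2 C2) (hc : 0 ≤ c)
    (hle : ∀ s, h1 s ≤ h2 s + c) :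
    upperMean μ B h1 ≤ upperMean μ B h2 + c := by
  have := upperMean_le_add hB hh1 hh2
    (⟨continuous_const, fun _ => hc, fun _ => le_rfl⟩ : NiceFn (fun _ => c) c) hle
  rwa [upperMean_const hB] at this

theorem upperMean_const_mul_le (hB : IsFolner μ B) {h : G → ℝ} {C : ℝ}
    (hh : NiceFn h C) {a : ℝ} (ha : 0 ≤ a) :
    upperMean μ B (fun s => a * h s) ≤ a * upperMean μ B h := by
  have key : ∀ n, avg μ B n (fun s => a * h s) = a * avg μ B n h := by
    intro n
    rw [avg, avg, integral_const_mul]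
    ring
  rw [upperMean]
  simp only [key]
  calc limsup (fun n => a * avg μ B n h) atTop
      ≤ limsup (fun _ : ℕ => a) atTop * limsup (fun n => avg μ B n h) atTop :=
        limsup_mul_le (Eventually.of_forall fun _ => ha).frequently
          (isBoundedUnder_of ⟨a, fun _ => le_rfl⟩)
          (Eventually.of_forall fun n => avg_nonneg' hB hh.nn n) (avg_bddAbove hB hh)
    _ = a * upperMean μ B h := by rw [limsup_const]; rfl

theorem upperMean_translate_le (hB : IsFolner μ B) {h : G → ℝ} {C : ℝ}
    (hh : NiceFn h C) (r : G) :
    upperMean μ B (fun s => h (s - r)) ≤ upperMean μ B h := by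
  have hC0 : 0 ≤ C := hh.Cnn
  set A : ℕ → Set G := fun n => (-r) +ᵥ B n with hA
  have hAmeas : ∀ n, μ (A n) = μ (B n) := fun n => measure_vadd _ _ _
  have hAms : ∀ n, MeasurableSet (A n) := fun n =>
    ((hB.isOpen n).vadd (-r)).measurableSet
  have hBms : ∀ n, MeasurableSet (B n) := fun n => (hB.isOpen n).measurableSet
  set U : ℕ → Set G := fun n => (B n \ A n) ∪ (A n \ B n) with hU
  have hUfin : ∀ n, μ (U n) ≠ ⊤ := by
    intro n
    refine ((measure_union_le _ _).trans_lt ?_).ne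
    have h1 : μ (B n \ A n) < ⊤ :=
      (measure_mono diff_subset).trans_lt (hB.measure_ne_top n).lt_top
    have h2 : μ (A n \ B n) < ⊤ :=
      (measure_mono diff_subset).trans_lt (by rw [hAmeas n]; exact (hB.measure_ne_top n).lt_top)
    exact ENNReal.add_lt_top.2 ⟨h1, h2⟩
  have hint : ∀ n, ∫ t in B n, h (t - r) ∂μ = ∫ t in A n, h t ∂μ := by
    intro n
    have hmp : MeasurePreserving (fun x : G => x - r) μ μ := measurePreserving_sub_right μ r
    have hme : MeasurableEmbedding (fun x : G => x - r) :=
      (MeasurableEquiv.subRight r).measurableEmbedding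
    have hpre : (fun x : G => x - r) ⁻¹' A n = B n := by
      ext x
      simp only [hA, Set.mem_preimage, Set.mem_vadd_set_iff_neg_vadd_mem, vadd_eq_add, neg_neg]
      have hx : r + (x - r) = x := by abel
      rw [hx]
    rw [← hpre]
    exact hmp.setIntegral_preimage_emb hme h (A n)
  have key : ∀ n, avg μ B n (fun s => h (s - r)) ≤
      avg μ B n h + C * ((μ (U n)).toReal / (μ (B n)).toReal) := by
    intro n
    have hiA : IntegrableOn h (A n) μ :=
      hh.integrableOn (by rw [hAmeas n]; exact hB.measure_ne_top n)
    have hiB : IntegrableOn h (B n) μ := hh.integrableOn (hB.measure_ne_top n)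
    have split1 : ∫ t in A n, h t ∂μ
        = ∫ t in A n ∩ B n, h t ∂μ + ∫ t in A n \ B n, h t ∂μ :=
      (integral_inter_add_diff (hBms n) hiA).symm
    have split2 : ∫ t in B n, h t ∂μ
        = ∫ t in B n ∩ A n, h t ∂μ + ∫ t in B n \ A n, h t ∂μ :=
      (integral_inter_add_diff (hAms n) hiB).symm
    have hfinABn : μ (A n \ B n) ≠ ⊤ := fun hc =>
      hUfin n (eq_top_mono (measure_mono subset_union_right) hc)
    have hd : ∫ t in A n \ B n, h t ∂μ ≤ C * (μ (U n)).toReal := by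
      calc ∫ t in A n \ B n, h t ∂μ ≤ ∫ _ in A n \ B n, C ∂μ :=
            setIntegral_mono (hiA.mono_set diff_subset)
              (integrableOn_const hfinABn) hh.bd
        _ = (μ (A n \ B n)).toReal * C := by rw [setIntegral_const, smul_eq_mul, measureReal_def]
        _ ≤ (μ (U n)).toReal * C := by
            refine mul_le_mul_of_nonneg_right ?_ hC0
            exact ENNReal.toReal_le_toReal hfinABn (hUfin n) |>.2
              (measure_mono subset_union_right)
        _ = C * (μ (U n)).toReal := mul_comm _ _
    have hnn : 0 ≤ ∫ t in B n \ A n, h t ∂μ :=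
      setIntegral_nonneg ((hBms n).diff (hAms n)) fun s _ => hh.nn s
    have hAB : ∫ t in A n, h t ∂μ ≤ ∫ t in B n, h t ∂μ + C * (μ (U n)).toReal := by
      rw [split1, split2, inter_comm]
      linarith
    have hpos := hB.toReal_pos n
    calc avg μ B n (fun s => h (s - r)) = (μ (B n)).toReal⁻¹ * ∫ t in A n, h t ∂μ := by
          rw [avg, hint n]
      _ ≤ (μ (B n)).toReal⁻¹ * (∫ t in B n, h t ∂μ + C * (μ (U n)).toReal) :=
          mul_le_mul_of_nonneg_left hAB (inv_nonneg.2 ENNReal.toReal_nonneg)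
      _ = avg μ B n h + C * ((μ (U n)).toReal / (μ (B n)).toReal) := by
          rw [avg, mul_add, div_eq_mul_inv]
          ring
  have htend : Tendsto (fun n => C * ((μ (U n)).toReal / (μ (B n)).toReal)) atTop (𝓝 0) := by
    have := (hB.folner (-r)).const_mul C
    rw [mul_zero] at this
    exact this
  have hh' : NiceFn (fun s => h (s - r)) C :=
    ⟨hh.c.comp (continuous_sub_right r), fun s => hh.nn _, fun s => hh.bd _⟩
  calc upperMean μ B (fun s => h (s - r))
      ≤ limsup (fun n => avg μ B n h + C * ((μ (U n)).toReal / (μ (B n)).toReal)) atTop :=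
        limsup_le_limsup (Eventually.of_forall key) (avg_cobdd hB hh'.nn)
          (isBoundedUnder_le_add (avg_bddAbove hB hh) htend.isBoundedUnder_le)
    _ ≤ upperMean μ B h
        + limsup (fun n => C * ((μ (U n)).toReal / (μ (B n)).toReal)) atTop :=
        limsup_add_le (avg_bddBelow hB hh.nn) (avg_bddAbove hB hh)
          htend.isBoundedUnder_ge.isCoboundedUnder_le htend.isBoundedUnder_le
    _ = upperMean μ B h := by rw [htend.limsup_eq, add_zero]

theorem upperMean_translate (hB : IsFolner μ B) {h : G → ℝ} {C : ℝ}
    (hh : NiceFn h C) (r : G) :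
    upperMean μ B (fun s => h (s - r)) = upperMean μ B h := by
  refine le_antisymm (upperMean_translate_le hB hh r) ?_
  have hh' : NiceFn (fun s => h (s - r)) C :=
    ⟨hh.c.comp (continuous_sub_right r), fun s => hh.nn _, fun s => hh.bd _⟩
  have := upperMean_translate_le hB hh' (-r)
  simpa only [sub_neg_eq_add, add_sub_cancel_right] using this

/-- The averaged distance between two translates of `f`. -/
def Dz (ν : Measure G) (Bs : ℕ → Set G) (f : G → ℂ) (t u : G) : ℝ :=
  upperMean ν Bs fun s => ‖f (s - t) - f (s - u)‖

theorem nice_dz {f : G → ℂ} {C : ℝ} (hfc : Continuous f) (hfb : ∀ s, ‖f s‖ ≤ C)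
    (t u : G) : NiceFn (fun s => ‖f (s - t) - f (s - u)‖) (C + C) :=
  ⟨((hfc.comp (continuous_sub_right t)).sub (hfc.comp (continuous_sub_right u))).norm,
    fun _ => norm_nonneg _,
    fun s => (norm_sub_le _ _).trans (add_le_add (hfb _) (hfb _))⟩

theorem nice_diff {f : G → ℂ} {C : ℝ} (hfc : Continuous f) (hfb : ∀ s, ‖f s‖ ≤ C)
    (t : G) : NiceFn (fun s => ‖f s - f (s - t)‖) (C + C) :=
  ⟨(hfc.sub (hfc.comp (continuous_sub_right t))).norm,
    fun _ => norm_nonneg _,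
    fun s => (norm_sub_le _ _).trans (add_le_add (hfb _) (hfb _))⟩

theorem Dz_symm (ν : Measure G) (Bs : ℕ → Set G) (f : G → ℂ) (t u : G) :
    Dz ν Bs f t u = Dz ν Bs f u t := by
  unfold Dz
  congr 1
  funext s
  exact norm_sub_rev _ _

theorem Dz_zero_left (f : G → ℂ) (t : G) :
    Dz μ B f 0 t = upperMean μ B (fun s => ‖f s - f (s - t)‖) := by
  simp only [Dz, sub_zero]

theorem Dz_tri (hB : IsFolner μ B) {f : G → ℂ} {C : ℝ} (hfc : Continuous f)
    (hfb : ∀ s, ‖f s‖ ≤ C) (t v u : G) :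
    Dz μ B f t u ≤ Dz μ B f t v + Dz μ B f v u :=
  upperMean_le_add hB (nice_dz hfc hfb t u) (nice_dz hfc hfb t v) (nice_dz hfc hfb v u)
    fun s => by
      simpa [dist_eq_norm] using dist_triangle (f (s - t)) (f (s - v)) (f (s - u))

theorem Dz_shift (hB : IsFolner μ B) {f : G → ℂ} {C : ℝ} (hfc : Continuous f)
    (hfb : ∀ s, ‖f s‖ ≤ C) (t u r : G) :
    Dz μ B f (t + r) (u + r) = Dz μ B f t u := by
  have heq : (fun s => ‖f (s - (t + r)) - f (s - (u + r))‖)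
      = fun s => ‖f ((s - r) - t) - f ((s - r) - u)‖ := by
    funext s
    rw [sub_add_eq_sub_sub_swap s t r, sub_add_eq_sub_sub_swap s u r]
  rw [Dz, Dz, heq]
  exact upperMean_translate hB (nice_dz hfc hfb t u) r

theorem Dz_le_of (hB : IsFolner μ B) {f : G → ℂ} {C c : ℝ} (hfc : Continuous f)
    (hfb : ∀ s, ‖f s‖ ≤ C) {t u : G}
    (hc : ∀ s, ‖f (s - t) - f (s - u)‖ ≤ c) : Dz μ B f t u ≤ c :=
  upperMean_le_of hB (nice_dz hfc hfb t u) hc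

theorem uc_modulus {f : G → ℂ} (hu : UniformContinuous f) {δ : ℝ} (hδ : 0 < δ) :
    ∃ V : Set G, IsOpen V ∧ (0 : G) ∈ V ∧ ∀ x y : G, y - x ∈ V → ‖f x - f y‖ < δ := by
  have hW : {p : ℂ × ℂ | dist p.1 p.2 < δ} ∈ 𝓤 ℂ := Metric.dist_mem_uniformity hδ
  have h1 : {p : G × G | (f p.1, f p.2) ∈ {q : ℂ × ℂ | dist q.1 q.2 < δ}} ∈ 𝓤 G :=
    uniformContinuous_def.mp hu _ hW
  rw [uniformity_eq_comap_nhds_zero G] at h1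
  obtain ⟨V₁, hV₁, hsub⟩ := mem_comap.mp h1
  obtain ⟨V, hVsub, hVopen, hV0⟩ := mem_nhds_iff.mp hV₁
  refine ⟨V, hVopen, hV0, fun x y hxy => ?_⟩
  have hmem : ((x, y) : G × G) ∈ (fun p : G × G => p.2 - p.1) ⁻¹' V₁ := hVsub hxy
  have := hsub hmem
  simpa [dist_eq_norm] using this

theorem totbdd (hB : IsFolner μ B) {f : G → ℂ} {C : ℝ} (hfc : Continuous f)
    (hfb : ∀ s, ‖f s‖ ≤ C) (hu : UniformContinuous f) (hap : MeanAPFun μ B f)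
    {δ : ℝ} (hδ : 0 < δ) :
    ∃ F : Finset G, ∀ t : G, ∃ u ∈ F, Dz μ B f t u < δ := by
  obtain ⟨K, hK, hKcov⟩ := hap (δ / 3) (by positivity)
  obtain ⟨V, hVopen, hV0, hV⟩ := uc_modulus hu (show (0 : ℝ) < δ / 3 by positivity)
  have hsU : K ⊆ ⋃ k : G, k +ᵥ V := fun k _ =>
    mem_iUnion.2 ⟨k, Set.mem_vadd_set.2 ⟨0, hV0, by simp⟩⟩
  obtain ⟨F, hF⟩ := hK.elim_finite_subcover (fun k : G => k +ᵥ V)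
    (fun k => hVopen.vadd k) hsU
  refine ⟨F, fun t => ?_⟩
  obtain ⟨a, haP, haK⟩ := hKcov t
  obtain ⟨ki, hkiF, hki⟩ := mem_iUnion₂.mp (hF haK)
  refine ⟨ki, hkiF, ?_⟩
  have h1 : Dz μ B f t (a + ki) ≤ δ / 3 := by
    refine Dz_le_of hB hfc hfb fun s => ?_
    refine (hV (s - t) (s - (a + ki)) ?_).le
    obtain ⟨v, hv, hvk⟩ := Set.mem_vadd_set.mp hki
    have hv' : t - a - ki = v := by
      rw [← hvk, vadd_eq_add]
      abel
    have harr : s - (a + ki) - (s - t) = t - a - ki := by abel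
    rw [harr, hv']
    exact hv
  have h2 : Dz μ B f (a + ki) ki < δ / 3 := by
    have hsh : Dz μ B f (a + ki) ki = Dz μ B f a 0 := by
      have := Dz_shift hB hfc hfb a 0 ki
      simpa using this
    rw [hsh, Dz_symm, Dz_zero_left]
    exact haP
  have htri := Dz_tri hB hfc hfb t (a + ki) ki
  linarith

theorem relDense_univ : RelDense (Set.univ : Set G) :=
  ⟨{0}, isCompact_singleton, fun g => ⟨g, trivial, by simp⟩⟩

theorem RelDense.mono' {A A' : Set G} (h : A ⊆ A') (hA : RelDense A) : RelDense A' :=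
  let ⟨K, hK, hc⟩ := hA
  ⟨K, hK, fun g => let ⟨a, ha, hga⟩ := hc g; ⟨a, h ha, hga⟩⟩

theorem joint (hB : IsFolner μ B) {f g : G → ℂ} {Cf Cg : ℝ}
    (hfc : Continuous f) (hfb : ∀ s, ‖f s‖ ≤ Cf) (hfu : UniformContinuous f)
    (hfap : MeanAPFun μ B f)
    (hgc : Continuous g) (hgb : ∀ s, ‖g s‖ ≤ Cg) (hgu : UniformContinuous g)
    (hgap : MeanAPFun μ B g) {ε : ℝ} (hε : 0 < ε) :
    RelDense {t : G | Dz μ B f 0 t < ε ∧ Dz μ B g 0 t < ε} := by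
  classical
  obtain ⟨Ff, hFf⟩ := totbdd hB hfc hfb hfu hfap (half_pos hε)
  obtain ⟨Fg, hFg⟩ := totbdd hB hgc hgb hgu hgap (half_pos hε)
  have hchoice : ∀ p : G × G, ∃ r : G,
      (∃ r', Dz μ B f r' p.1 < ε / 2 ∧ Dz μ B g r' p.2 < ε / 2) →
        Dz μ B f r p.1 < ε / 2 ∧ Dz μ B g r p.2 < ε / 2 := by
    intro p
    by_cases h : ∃ r', Dz μ B f r' p.1 < ε / 2 ∧ Dz μ B g r' p.2 < ε / 2
    · exact ⟨h.choose, fun _ => h.choose_spec⟩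
    · exact ⟨0, fun hc => absurd hc h⟩
  choose w hwspec using hchoice
  refine ⟨↑((Ff ×ˢ Fg).image w), (Finset.finite_toSet _).isCompact, fun t => ?_⟩
  obtain ⟨u, huF, hu⟩ := hFf t
  obtain ⟨v, hvF, hv⟩ := hFg t
  have hex : ∃ r' : G, Dz μ B f r' u < ε / 2 ∧ Dz μ B g r' v < ε / 2 := ⟨t, hu, hv⟩
  obtain ⟨hrf, hrg⟩ := hwspec (u, v) hex
  set r := w (u, v) with hr
  refine ⟨t - r, ⟨?_, ?_⟩, ?_⟩
  · have hsh : Dz μ B f 0 (t - r) = Dz μ B f r t := by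
      have := Dz_shift hB hfc hfb 0 (t - r) r
      rw [zero_add, sub_add_cancel] at this
      exact this.symm
    show Dz μ B f 0 (t - r) < ε
    rw [hsh]
    calc Dz μ B f r t ≤ Dz μ B f r u + Dz μ B f u t := Dz_tri hB hfc hfb r u t
      _ = Dz μ B f r u + Dz μ B f t u := by rw [Dz_symm μ B f u t]
      _ < ε / 2 + ε / 2 := add_lt_add hrf hu
      _ = ε := add_halves ε
  · have hsh : Dz μ B g 0 (t - r) = Dz μ B g r t := by
      have := Dz_shift hB hgc hgb 0 (t - r) r
      rw [zero_add, sub_add_cancel] at this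
      exact this.symm
    show Dz μ B g 0 (t - r) < ε
    rw [hsh]
    calc Dz μ B g r t ≤ Dz μ B g r v + Dz μ B g v t := Dz_tri hB hgc hgb r v t
      _ = Dz μ B g r v + Dz μ B g t v := by rw [Dz_symm μ B g v t]
      _ < ε / 2 + ε / 2 := add_lt_add hrg hv
      _ = ε := add_halves ε
  · have : t - (t - r) = r := sub_sub_cancel t r
    rw [this]
    exact Finset.mem_coe.mpr (Finset.mem_image.mpr
      ⟨(u, v), Finset.mem_product.mpr ⟨huF, hvF⟩, hr.symm⟩)

theorem meanAP_const (hB : IsFolner μ B) (c : ℂ) : MeanAPFun μ B (fun _ : G => c) := by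
  intro ε hε
  refine RelDense.mono' (fun t _ => ?_) (relDense_univ (G := G))
  simp only [Set.mem_setOf_eq, sub_self, norm_zero]
  rw [upperMean_const hB]
  exact hε

theorem meanAP_add (hB : IsFolner μ B) {f g : G → ℂ} {Cf Cg : ℝ}
    (hfb : ∀ s, ‖f s‖ ≤ Cf) (hfu : UniformContinuous f) (hfap : MeanAPFun μ B f)
    (hgb : ∀ s, ‖g s‖ ≤ Cg) (hgu : UniformContinuous g) (hgap : MeanAPFun μ B g) :
    MeanAPFun μ B (f + g) := by
  intro ε hε
  have hfc := hfu.continuous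
  have hgc := hgu.continuous
  refine RelDense.mono' (fun t ht => ?_)
    (joint hB hfc hfb hfu hfap hgc hgb hgu hgap (half_pos hε))
  obtain ⟨h1, h2⟩ := ht
  rw [Set.mem_setOf_eq]
  rw [Dz_zero_left] at h1
  rw [Dz_zero_left] at h2
  have key : upperMean μ B (fun s => ‖(f + g) s - (f + g) (s - t)‖)
      ≤ upperMean μ B (fun s => ‖f s - f (s - t)‖)
        + upperMean μ B (fun s => ‖g s - g (s - t)‖) := by
    refine upperMean_le_add hB (nice_diff (hfc.add hgc)
      (fun s => (norm_add_le _ _).trans (add_le_add (hfb s) (hgb s))) t)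
      (nice_diff hfc hfb t) (nice_diff hgc hgb t) fun s => ?_
    simp only [Pi.add_apply]
    rw [add_sub_add_comm]
    exact norm_add_le _ _
  calc upperMean μ B (fun s => ‖(f + g) s - (f + g) (s - t)‖)
      ≤ _ + _ := key
    _ < ε / 2 + ε / 2 := add_lt_add h1 h2
    _ = ε := add_halves ε

theorem meanAP_mul (hB : IsFolner μ B) {f g : G → ℂ} {Cf Cg : ℝ}
    (hfb : ∀ s, ‖f s‖ ≤ Cf) (hfu : UniformContinuous f) (hfap : MeanAPFun μ B f)
    (hgb : ∀ s, ‖g s‖ ≤ Cg) (hgu : UniformContinuous g) (hgap : MeanAPFun μ B g) :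
    MeanAPFun μ B (f * g) := by
  intro ε hε
  have hfc := hfu.continuous
  have hgc := hgu.continuous
  set Cf' := max Cf 0 with hCf'
  set Cg' := max Cg 0 with hCg'
  have hCf'0 : 0 ≤ Cf' := le_max_right _ _
  have hCg'0 : 0 ≤ Cg' := le_max_right _ _
  have hfb' : ∀ s, ‖f s‖ ≤ Cf' := fun s => (hfb s).trans (le_max_left _ _)
  have hgb' : ∀ s, ‖g s‖ ≤ Cg' := fun s => (hgb s).trans (le_max_left _ _)
  set ε' := ε / (Cf' + Cg' + 1) with hε'
  have hden : (0 : ℝ) < Cf' + Cg' + 1 := by positivity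
  have hε'pos : 0 < ε' := div_pos hε hden
  refine RelDense.mono' (fun t ht => ?_)
    (joint hB hfc hfb hfu hfap hgc hgb hgu hgap hε'pos)
  obtain ⟨h1, h2⟩ := ht
  rw [Dz_zero_left] at h1
  rw [Dz_zero_left] at h2
  rw [Set.mem_setOf_eq]
  have ptw : ∀ s, ‖(f * g) s - (f * g) (s - t)‖
      ≤ Cf' * ‖g s - g (s - t)‖ + Cg' * ‖f s - f (s - t)‖ := by
    intro s
    simp only [Pi.mul_apply]
    have hdec : f s * g s - f (s - t) * g (s - t)
        = f s * (g s - g (s - t)) + (f s - f (s - t)) * g (s - t) := by ring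
    rw [hdec]
    calc ‖f s * (g s - g (s - t)) + (f s - f (s - t)) * g (s - t)‖
        ≤ ‖f s * (g s - g (s - t))‖ + ‖(f s - f (s - t)) * g (s - t)‖ := norm_add_le _ _
      _ = ‖f s‖ * ‖g s - g (s - t)‖ + ‖f s - f (s - t)‖ * ‖g (s - t)‖ := by
          rw [norm_mul, norm_mul]
      _ ≤ Cf' * ‖g s - g (s - t)‖ + ‖f s - f (s - t)‖ * Cg' :=
          add_le_add (mul_le_mul_of_nonneg_right (hfb' s) (norm_nonneg _))
            (mul_le_mul_of_nonneg_left (hgb' _) (norm_nonneg _))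
      _ = Cf' * ‖g s - g (s - t)‖ + Cg' * ‖f s - f (s - t)‖ := by ring
  have hfgb : ∀ s, ‖(f * g) s‖ ≤ Cf' * Cg' := fun s => by
    rw [Pi.mul_apply, norm_mul]
    exact mul_le_mul (hfb' s) (hgb' s) (norm_nonneg _) hCf'0
  have key : upperMean μ B (fun s => ‖(f * g) s - (f * g) (s - t)‖)
      ≤ Cf' * upperMean μ B (fun s => ‖g s - g (s - t)‖)
        + Cg' * upperMean μ B (fun s => ‖f s - f (s - t)‖) := by
    calc upperMean μ B (fun s => ‖(f * g) s - (f * g) (s - t)‖)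
        ≤ upperMean μ B (fun s => Cf' * ‖g s - g (s - t)‖)
          + upperMean μ B (fun s => Cg' * ‖f s - f (s - t)‖) :=
          upperMean_le_add hB (nice_diff (hfc.mul hgc) hfgb t)
            ((nice_diff hgc hgb' t).const_mul hCf'0)
            ((nice_diff hfc hfb' t).const_mul hCg'0) ptw
      _ ≤ _ :=
          add_le_add (upperMean_const_mul_le hB (nice_diff hgc hgb' t) hCf'0)
            (upperMean_const_mul_le hB (nice_diff hfc hfb' t) hCg'0)
  have hfinal : Cf' * upperMean μ B (fun s => ‖g s - g (s - t)‖)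
      + Cg' * upperMean μ B (fun s => ‖f s - f (s - t)‖) < ε := by
    have e1 : Cf' * upperMean μ B (fun s => ‖g s - g (s - t)‖) ≤ Cf' * ε' :=
      mul_le_mul_of_nonneg_left h2.le hCf'0
    have e2 : Cg' * upperMean μ B (fun s => ‖f s - f (s - t)‖) ≤ Cg' * ε' :=
      mul_le_mul_of_nonneg_left h1.le hCg'0
    have e3 : (Cf' + Cg') * ε' < ε := by
      rw [hε', mul_div_assoc'] -- (Cf'+Cg') * ε / (Cf'+Cg'+1)
      rw [div_lt_iff₀ hden]
      nlinarith
    nlinarith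
  exact lt_of_le_of_lt key hfinal

theorem meanAP_conj {f : G → ℂ} (hap : MeanAPFun μ B f) :
    MeanAPFun μ B fun t => (starRingEnd ℂ) (f t) := by
  intro ε hε
  refine RelDense.mono' (fun t ht => ?_) (hap ε hε)
  rw [Set.mem_setOf_eq] at ht ⊢
  have heq : (fun s => ‖(starRingEnd ℂ) (f s) - (starRingEnd ℂ) (f (s - t))‖)
      = fun s => ‖f s - f (s - t)‖ := by
    funext s
    rw [← map_sub, RCLike.norm_conj]
  show upperMean μ B (fun s => ‖(starRingEnd ℂ) (f s) - (starRingEnd ℂ) (f (s - t))‖) < ε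
  rw [heq]
  exact ht

theorem uc_mul {f g : G → ℂ} {Cf Cg : ℝ}
    (hfb : ∀ s, ‖f s‖ ≤ Cf) (hfu : UniformContinuous f)
    (hgb : ∀ s, ‖g s‖ ≤ Cg) (hgu : UniformContinuous g) :
    UniformContinuous (f * g) := by
  set Cf' := max Cf 0 + 1 with hCf'
  set Cg' := max Cg 0 + 1 with hCg'
  have hCf'0 : 0 < Cf' := by positivity
  have hCg'0 : 0 < Cg' := by positivity
  have hfb' : ∀ s, ‖f s‖ ≤ Cf' := fun s =>
    (hfb s).trans ((le_max_left _ _).trans (le_add_of_nonneg_right zero_le_one))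
  have hgb' : ∀ s, ‖g s‖ ≤ Cg' := fun s =>
    (hgb s).trans ((le_max_left _ _).trans (le_add_of_nonneg_right zero_le_one))
  refine (Metric.uniformity_basis_dist.tendsto_right_iff).mpr fun ε hε => ?_
  set ε' := ε / (Cf' + Cg') with heps
  have hden : (0 : ℝ) < Cf' + Cg' := by positivity
  have hε' : 0 < ε' := div_pos hε hden
  have h1 := (Metric.uniformity_basis_dist.tendsto_right_iff).mp hfu ε' hε'
  have h2 := (Metric.uniformity_basis_dist.tendsto_right_iff).mp hgu ε' hε'
  filter_upwards [h1, h2] with p hp1 hp2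
  rw [dist_eq_norm] at hp1 hp2 ⊢
  have hdec : (f * g) p.1 - (f * g) p.2
      = f p.1 * (g p.1 - g p.2) + (f p.1 - f p.2) * g p.2 := by
    simp only [Pi.mul_apply]; ring
  calc ‖(f * g) p.1 - (f * g) p.2‖
      ≤ ‖f p.1‖ * ‖g p.1 - g p.2‖ + ‖f p.1 - f p.2‖ * ‖g p.2‖ := by
        rw [hdec]
        exact (norm_add_le _ _).trans (by rw [norm_mul, norm_mul])
    _ < Cf' * ε' + ε' * Cg' := by
        have t1 : ‖f p.1‖ * ‖g p.1 - g p.2‖ < Cf' * ε' := by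
          rcases eq_or_lt_of_le (norm_nonneg (g p.1 - g p.2)) with h0 | h0
          · rw [← h0, mul_zero]; positivity
          · calc ‖f p.1‖ * ‖g p.1 - g p.2‖ ≤ Cf' * ‖g p.1 - g p.2‖ :=
                mul_le_mul_of_nonneg_right (hfb' _) (norm_nonneg _)
              _ < Cf' * ε' := by exact mul_lt_mul_of_pos_left hp2 hCf'0
        have t2 : ‖f p.1 - f p.2‖ * ‖g p.2‖ ≤ ε' * Cg' := by
          exact mul_le_mul hp1.le (hgb' _) (norm_nonneg _) hε'.le
        linarith
    _ ≤ ε := by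
        rw [heps, div_eq_mul_inv]
        have : Cf' * (ε * (Cf' + Cg')⁻¹) + ε * (Cf' + Cg')⁻¹ * Cg'
            = ε * ((Cf' + Cg') * (Cf' + Cg')⁻¹) := by ring
        rw [this, mul_inv_cancel₀ hden.ne', mul_one]

end Helpers

/-- The bounded uniformly continuous mean almost periodic functions form
a conjugation-invariant subalgebra of the bounded uniformly continuous functions which is
closed with respect to the supremum norm. -/
theorem statement_17
    {G : Type*} [AddCommGroup G] [UniformSpace G] [IsUniformAddGroup G] [T2Space G]
    [LocallyCompactSpace G] [SigmaCompactSpace G] [MeasurableSpace G] [BorelSpace G]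
    (μ : Measure G) [μ.IsAddHaarMeasure] (B : ℕ → Set G) (hB : IsFolner μ B) :
    (∀ f ∈ MeanAPAlgebra μ B, (fun t => (starRingEnd ℂ) (f t)) ∈ MeanAPAlgebra μ B) ∧
    (∀ f ∈ MeanAPAlgebra μ B, ∀ g ∈ MeanAPAlgebra μ B, f + g ∈ MeanAPAlgebra μ B) ∧
    (∀ f ∈ MeanAPAlgebra μ B, ∀ g ∈ MeanAPAlgebra μ B, f * g ∈ MeanAPAlgebra μ B) ∧
    (∀ c : ℂ, ∀ f ∈ MeanAPAlgebra μ B, c • f ∈ MeanAPAlgebra μ B) ∧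
    ((fun _ : G => (1 : ℂ)) ∈ MeanAPAlgebra μ B) ∧
    (∀ f : G → ℂ, (∃ C : ℝ, ∀ t, ‖f t‖ ≤ C) → UniformContinuous f →
      (∀ ε : ℝ, 0 < ε → ∃ g ∈ MeanAPAlgebra μ B, ∀ t, ‖f t - g t‖ ≤ ε) →
      f ∈ MeanAPAlgebra μ B) := by
  refine ⟨?_, ?_, ?_, ?_, ?_, ?_⟩
  · -- conjugation
    rintro f ⟨⟨Cf, hfb⟩, hfu, hfap⟩
    refine ⟨⟨Cf, fun t => ?_⟩, ?_, meanAP_conj hfap⟩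
    · rw [RCLike.norm_conj]; exact hfb t
    · exact (Isometry.uniformContinuous (Isometry.of_dist_eq fun a b => by
        rw [dist_eq_norm, dist_eq_norm, ← map_sub, RCLike.norm_conj])).comp hfu
  · -- addition
    rintro f ⟨⟨Cf, hfb⟩, hfu, hfap⟩ g ⟨⟨Cg, hgb⟩, hgu, hgap⟩
    exact ⟨⟨Cf + Cg, fun t => (norm_add_le _ _).trans (add_le_add (hfb t) (hgb t))⟩,
      hfu.add hgu, meanAP_add hB hfb hfu hfap hgb hgu hgap⟩
  · -- multiplication
    rintro f ⟨⟨Cf, hfb⟩, hfu, hfap⟩ g ⟨⟨Cg, hgb⟩, hgu, hgap⟩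
    refine ⟨⟨max Cf 0 * max Cg 0, fun t => ?_⟩, uc_mul hfb hfu hgb hgu,
      meanAP_mul hB hfb hfu hfap hgb hgu hgap⟩
    rw [Pi.mul_apply, norm_mul]
    exact mul_le_mul ((hfb t).trans (le_max_left _ _)) ((hgb t).trans (le_max_left _ _))
      (norm_nonneg _) (le_max_right _ _)
  · -- scalar multiplication
    rintro c f ⟨⟨Cf, hfb⟩, hfu, hfap⟩
    have hcb : ∀ s : G, ‖(fun _ : G => c) s‖ ≤ ‖c‖ := fun _ => le_rfl
    have hsmul : c • f = (fun _ : G => c) * f := rfl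
    refine ⟨⟨‖c‖ * Cf, fun t => ?_⟩, ?_, ?_⟩
    · rw [Pi.smul_apply, norm_smul]
      refine mul_le_mul_of_nonneg_left (hfb t) (norm_nonneg _)
    · exact hfu.const_smul c
    · rw [hsmul]
      exact meanAP_mul hB hcb uniformContinuous_const (meanAP_const hB c) hfb hfu hfap
  · -- constant one
    exact ⟨⟨1, fun _ => by simp⟩, uniformContinuous_const, meanAP_const hB 1⟩
  · -- closed under uniform limits
    rintro f ⟨Cf, hfb⟩ hfu happ
    refine ⟨⟨Cf, hfb⟩, hfu, ?_⟩
    intro ε hε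
    have hε4 : (0 : ℝ) < ε / 4 := by positivity
    obtain ⟨g, ⟨⟨Cg, hgb⟩, hgu, hgap⟩, hclose⟩ := happ (ε / 4) hε4
    refine RelDense.mono' (fun t ht => ?_) (hgap (ε / 4) hε4)
    rw [Set.mem_setOf_eq] at ht ⊢
    have hfc := hfu.continuous
    have hgc := hgu.continuous
    have ptw : ∀ s, ‖f s - f (s - t)‖ ≤ ‖g s - g (s - t)‖ + ε / 2 := by
      intro s
      have e1 : ‖f s - g s‖ ≤ ε / 4 := hclose s
      have e2 : ‖g (s - t) - f (s - t)‖ ≤ ε / 4 := by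
        rw [norm_sub_rev]; exact hclose (s - t)
      calc ‖f s - f (s - t)‖
          = ‖(f s - g s) + (g s - g (s - t)) + (g (s - t) - f (s - t))‖ := by
            congr 1; ring
        _ ≤ ‖(f s - g s) + (g s - g (s - t))‖ + ‖g (s - t) - f (s - t)‖ := norm_add_le _ _
        _ ≤ ‖f s - g s‖ + ‖g s - g (s - t)‖ + ‖g (s - t) - f (s - t)‖ :=
            add_le_add_left (norm_add_le _ _) _
        _ ≤ ε / 4 + ‖g s - g (s - t)‖ + ε / 4 := by
            exact add_le_add (add_le_add_left e1 _) e2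
        _ = ‖g s - g (s - t)‖ + ε / 2 := by ring
    have key : upperMean μ B (fun s => ‖f s - f (s - t)‖)
        ≤ upperMean μ B (fun s => ‖g s - g (s - t)‖) + ε / 2 :=
      upperMean_le_add_const hB (nice_diff hfc hfb t) (nice_diff hgc hgb t)
        (by positivity) ptw
    calc upperMean μ B (fun s => ‖f s - f (s - t)‖)
        ≤ upperMean μ B (fun s => ‖g s - g (s - t)‖) + ε / 2 := key
      _ < ε / 4 + ε / 2 := add_lt_add_left ht _
      _ < ε := by linarith

end APPaper
end
end
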